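/- Let F be the Frobenius companion matrix of p and let C be a unit sparse companion matrix of p in Hessenberg form. Then N(F) < 2·N(C), and N(F) − N(C) ≤ 1; moreover the latter inequality is strict when a_0 ≠ 0. -/

import Mathlib

noncomputable section

/-- Maximum absolute row sum (the `∞`-norm). -/
def infNorm {n : ℕ} (A : Matrix (Fin n) (Fin n) ℂ) : ℝ :=
  ⨆ i, ∑ j, ‖A i j‖

/-- Maximum absolute column sum (the `1`-norm). -/
def oneNorm {n : ℕ} (A : Matrix (Fin n) (Fin n) ℂ) : ℝ :=
  ⨆ j, ∑ i, ‖A i j‖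

/-- `N(A) = min {‖A‖_∞, ‖A‖_1}`. -/
def NN {n : ℕ} (A : Matrix (Fin n) (Fin n) ℂ) : ℝ :=
  min (infNorm A) (oneNorm A)

/-- The monic polynomial `p(x) = x^n + a_{n-1}x^{n-1} + ⋯ + a_1 x + a_0`. -/
def pPoly (n : ℕ) (a : ℕ → ℂ) : Polynomial ℂ :=
  Polynomial.X ^ n + ∑ k ∈ Finset.range n, Polynomial.C (a k) * Polynomial.X ^ k

/-- Coefficients of the monic reversal polynomial `p♯`:
`asharp n a k` is the coefficient of `x^k` in `p♯`, namely `1/a_0` for `k = 0`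
and `a_{n-k}/a_0` for `1 ≤ k ≤ n-1`. -/
def asharp (n : ℕ) (a : ℕ → ℂ) : ℕ → ℂ :=
  fun k => if k = 0 then 1 / a 0 else a (n - k) / a 0

/-- A unit sparse companion matrix of `p` in Hessenberg form, with explicit data:
`m` (0-based; `m + 1 ≤ n`), and 0-based positions `(r k, c k)` (for `k = 0, …, n-1`)
satisfying `r k - c k = k`, `m ≤ r k ≤ n-1`, `0 ≤ c k ≤ m`; the superdiagonal
entries are `1`, the entry at `(r k, c k)` is `-a_{n-1-k}`, and all other entries
are `0`.  (This is the 0-based translation of the 1-based description.) -/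
def IsUnitSparseData (n m : ℕ) (a : ℕ → ℂ) (C : Matrix (Fin n) (Fin n) ℂ)
    (r c : Fin n → Fin n) : Prop :=
  m + 1 ≤ n ∧
  (∀ k : Fin n, (r k : ℕ) = (c k : ℕ) + (k : ℕ)) ∧
  (∀ k : Fin n, m ≤ (r k : ℕ)) ∧
  (∀ k : Fin n, (c k : ℕ) ≤ m) ∧
  (∀ k : Fin n, C (r k) (c k) = -a (n - 1 - (k : ℕ))) ∧
  (∀ i j : Fin n, (j : ℕ) = (i : ℕ) + 1 → C i j = 1) ∧
  (∀ i j : Fin n, (j : ℕ) ≠ (i : ℕ) + 1 →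
    (∀ k : Fin n, ¬(r k = i ∧ c k = j)) → C i j = 0)

/-- A unit sparse companion matrix of `p` in Hessenberg form. -/
def IsUnitSparse (n : ℕ) (a : ℕ → ℂ) (C : Matrix (Fin n) (Fin n) ℂ) : Prop :=
  ∃ (m : ℕ) (r c : Fin n → Fin n), IsUnitSparseData n m a C r c

/-- A Fiedler companion matrix of `p` in Hessenberg form (with explicit position
data): a unit sparse companion matrix such that for `1 ≤ k ≤ n-1`, if `-a_{k-1}`
occupies position `(i,j)` then `-a_k` occupies position `(i-1,j)` or `(i,j+1)`.
Here the coefficient `-a_{n-1-k}` sits at position index `k`, so the coefficient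
`-a_{k-1}` has index `k' = n-k` and `-a_k` has index `n-1-k = k' - 1`. -/
def IsFiedlerData (n m : ℕ) (a : ℕ → ℂ) (C : Matrix (Fin n) (Fin n) ℂ)
    (r c : Fin n → Fin n) : Prop :=
  IsUnitSparseData n m a C r c ∧
  ∀ k k' : Fin n, (k' : ℕ) = (k : ℕ) + 1 →
    ((r k : ℕ) + 1 = (r k' : ℕ) ∧ c k = c k') ∨
    (r k = r k' ∧ (c k : ℕ) = (c k' : ℕ) + 1)

/-- The Frobenius companion matrix of the monic polynomial with coefficients `a`
(0-based: superdiagonal `1`'s and last row `-a_0, -a_1, …, -a_{n-1}`). -/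
def Frob (n : ℕ) (a : ℕ → ℂ) : Matrix (Fin n) (Fin n) ℂ :=
  Matrix.of fun i j =>
    if (j : ℕ) = (i : ℕ) + 1 then 1
    else if (i : ℕ) = n - 1 then -a (j : ℕ)
    else 0

/-- The Fiedler companion matrix `L_b` (0-based translation): superdiagonal `1`'s,
`(L_b)_{i,b} = -a_{n+b-1-i}` for `b ≤ i ≤ n-2`, and `(L_b)_{n-1,j} = -a_j` for
`0 ≤ j ≤ b`; all other entries `0`. -/
def Lmat (n b : ℕ) (a : ℕ → ℂ) : Matrix (Fin n) (Fin n) ℂ :=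
  Matrix.of fun i j =>
    if (j : ℕ) = (i : ℕ) + 1 then 1
    else if (i : ℕ) = n - 1 ∧ (j : ℕ) ≤ b then -a (j : ℕ)
    else if (j : ℕ) = b ∧ b ≤ (i : ℕ) ∧ (i : ℕ) + 2 ≤ n then -a (n + b - 1 - (i : ℕ))
    else 0

/-- The matrix `W` (0-based translation): `W_{0,0} = -a_{n-1}`, `W_{0,n-1} = -a_0`,
`W_{i,i-1} = 1` for `1 ≤ i ≤ n-1`, `W_{i,0} = a_{i-1}/a_0` for `2 ≤ i ≤ n-1`;
all other entries `0`. -/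
def Wmat (n : ℕ) (a : ℕ → ℂ) : Matrix (Fin n) (Fin n) ℂ :=
  Matrix.of fun i j =>
    if (i : ℕ) = 0 ∧ (j : ℕ) = 0 then -a (n - 1)
    else if (i : ℕ) = 0 ∧ (j : ℕ) = n - 1 then -a 0
    else if (i : ℕ) = (j : ℕ) + 1 then 1
    else if 2 ≤ (i : ℕ) ∧ (j : ℕ) = 0 then a ((i : ℕ) - 1) / a 0
    else 0

/-- The matrix `X_b` (0-based translation): `(X_b)_{0,j} = -a_{n-1-j}` for
`0 ≤ j ≤ n-2-b`, `(X_b)_{0,n-1} = -a_0`, `(X_b)_{i,i-1} = 1` for `1 ≤ i ≤ n-2`,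
`(X_b)_{n-1,n-2} = 1`, `(X_b)_{n-1,j} = a_{n-2-j}/a_0` for `n-2-b ≤ j ≤ n-3`;
all other entries `0`. -/
def Xmat (n b : ℕ) (a : ℕ → ℂ) : Matrix (Fin n) (Fin n) ℂ :=
  Matrix.of fun i j =>
    if (i : ℕ) = 0 ∧ (j : ℕ) + b ≤ n - 2 then -a (n - 1 - (j : ℕ))
    else if (i : ℕ) = 0 ∧ (j : ℕ) = n - 1 then -a 0
    else if (i : ℕ) = (j : ℕ) + 1 ∧ (i : ℕ) + 2 ≤ n then 1
    else if (i : ℕ) = n - 1 ∧ (j : ℕ) = n - 2 then 1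
    else if (i : ℕ) = n - 1 ∧ n - 2 ≤ (j : ℕ) + b ∧ (j : ℕ) + 3 ≤ n then
      a (n - 2 - (j : ℕ)) / a 0
    else 0

/-- A matrix `E` of type `E_c(q)` for the monic polynomial with coefficients `b`
(0-based translation of the 1-based description): superdiagonal `1`'s,
`E_{n-1,0} = -b_0`, and positions `(r k, col k)` for `k = 0, …, n-2` with
`r k = col k + k`, `c ≤ r k`, `1 ≤ col k ≤ c`, holding `-b_{n-1-k}`; all other
entries `0`. -/
def IsTypeE (n c : ℕ) (b : ℕ → ℂ) (E : Matrix (Fin n) (Fin n) ℂ) : Prop :=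
  ∃ r col : ℕ → Fin n,
    (∀ k : ℕ, k ≤ n - 2 → (r k : ℕ) = (col k : ℕ) + k) ∧
    (∀ k : ℕ, k ≤ n - 2 → c ≤ (r k : ℕ)) ∧
    (∀ k : ℕ, k ≤ n - 2 → 1 ≤ (col k : ℕ) ∧ (col k : ℕ) ≤ c) ∧
    (∀ k : ℕ, k ≤ n - 2 → E (r k) (col k) = -b (n - 1 - k)) ∧
    (∀ i j : Fin n, (j : ℕ) = (i : ℕ) + 1 → E i j = 1) ∧
    (∀ i j : Fin n, (i : ℕ) = n - 1 → (j : ℕ) = 0 → E i j = -b 0) ∧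
    (∀ i j : Fin n, (j : ℕ) ≠ (i : ℕ) + 1 → ¬((i : ℕ) = n - 1 ∧ (j : ℕ) = 0) →
      (∀ k : ℕ, k ≤ n - 2 → ¬(r k = i ∧ col k = j)) → E i j = 0)

/-- `A` is of type `E_c(p♯)⁻¹`: `A = E⁻¹` for some `E` of type `E_c(p♯)`. -/
def IsTypeEInv (n c : ℕ) (a : ℕ → ℂ) (A : Matrix (Fin n) (Fin n) ℂ) : Prop :=
  ∃ E : Matrix (Fin n) (Fin n) ℂ, IsTypeE n c (asharp n a) E ∧ A = E⁻¹



section Stmt5Aux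

variable {n : ℕ}

lemma rowsum_le_infNorm (A : Matrix (Fin n) (Fin n) ℂ) (i : Fin n) :
    ∑ j, ‖A i j‖ ≤ infNorm A :=
  le_ciSup (f := fun i => ∑ j, ‖A i j‖)
    (Set.Finite.bddAbove (Set.finite_range _)) i

lemma colsum_le_oneNorm (A : Matrix (Fin n) (Fin n) ℂ) (j : Fin n) :
    ∑ i, ‖A i j‖ ≤ oneNorm A :=
  le_ciSup (f := fun j => ∑ i, ‖A i j‖)
    (Set.Finite.bddAbove (Set.finite_range _)) j

lemma infNorm_le [Nonempty (Fin n)] (A : Matrix (Fin n) (Fin n) ℂ) (x : ℝ)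
    (h : ∀ i, ∑ j, ‖A i j‖ ≤ x) : infNorm A ≤ x := ciSup_le h

lemma oneNorm_le [Nonempty (Fin n)] (A : Matrix (Fin n) (Fin n) ℂ) (x : ℝ)
    (h : ∀ j, ∑ i, ‖A i j‖ ≤ x) : oneNorm A ≤ x := ciSup_le h

lemma single_le_rowsum (A : Matrix (Fin n) (Fin n) ℂ) (i j : Fin n) :
    ‖A i j‖ ≤ ∑ j', ‖A i j'‖ :=
  Finset.single_le_sum (f := fun j' => ‖A i j'‖)
    (fun _ _ => norm_nonneg _) (Finset.mem_univ j)

lemma single_le_colsum (A : Matrix (Fin n) (Fin n) ℂ) (i j : Fin n) :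
    ‖A i j‖ ≤ ∑ i', ‖A i' j‖ :=
  Finset.single_le_sum (f := fun i' => ‖A i' j‖)
    (fun _ _ => norm_nonneg _) (Finset.mem_univ i)

lemma pair_le_rowsum (A : Matrix (Fin n) (Fin n) ℂ) (i : Fin n) {j1 j2 : Fin n}
    (h : j1 ≠ j2) :
    ‖A i j1‖ + ‖A i j2‖ ≤ ∑ j, ‖A i j‖ := by
  rw [← Finset.sum_pair (f := fun j => ‖A i j‖) h]
  exact Finset.sum_le_sum_of_subset_of_nonneg (Finset.subset_univ _)
    (fun _ _ _ => norm_nonneg _)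

lemma pair_le_colsum (A : Matrix (Fin n) (Fin n) ℂ) (j : Fin n) {i1 i2 : Fin n}
    (h : i1 ≠ i2) :
    ‖A i1 j‖ + ‖A i2 j‖ ≤ ∑ i, ‖A i j‖ := by
  rw [← Finset.sum_pair (f := fun i => ‖A i j‖) h]
  exact Finset.sum_le_sum_of_subset_of_nonneg (Finset.subset_univ _)
    (fun _ _ _ => norm_nonneg _)

lemma fin_sum_indicator {t : ℕ} (ht : t < n) (x : ℝ) :
    (∑ j : Fin n, if (j : ℕ) = t then x else 0) = x := by
  rw [Finset.sum_eq_single (⟨t, ht⟩ : Fin n)]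
  · simp
  · intro b _ hb
    rw [if_neg]
    simpa [Fin.ext_iff] using hb
  · simp

end Stmt5Aux

/-- for any unit sparse companion matrix `C` of `p`,
`N(F) < 2·N(C)` and `N(F) - N(C) ≤ 1`, the latter strictly when `a_0 ≠ 0`. -/
theorem stmt5 (n : ℕ) (hn : 2 ≤ n) (a : ℕ → ℂ) (C : Matrix (Fin n) (Fin n) ℂ)
    (hC : IsUnitSparse n a C) :
    NN (Frob n a) < 2 * NN C ∧ NN (Frob n a) - NN C ≤ 1 ∧
      (a 0 ≠ 0 → NN (Frob n a) - NN C < 1) := by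
  obtain ⟨m, r, c, hmn, hrc, hmr, hcm, hval, hsupd, hzero⟩ := hC
  haveI : Nonempty (Fin n) := ⟨⟨0, by omega⟩⟩
  set S : ℝ := ∑ j ∈ Finset.range n, ‖a j‖ with hSdef
  have hSS : ∑ k : Fin n, ‖a (n - 1 - (k : ℕ))‖ = S := by
    rw [Fin.sum_univ_eq_sum_range (fun k => ‖a (n - 1 - k)‖) n]
    exact Finset.sum_range_reflect (fun j => ‖a j‖) n
  -- the last coefficient position
  set kl : Fin n := ⟨n - 1, by omega⟩ with hkldef
  have hklv : (kl : ℕ) = n - 1 := rfl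
  have hrcl := hrc kl
  have hrkl_lt := (r kl).isLt
  have hckl : (c kl : ℕ) = 0 := by omega
  have hrkl : (r kl : ℕ) = n - 1 := by omega
  have hCa0 : C (r kl) (c kl) = -a 0 := by
    have h := hval kl
    rwa [show n - 1 - ((kl : Fin n) : ℕ) = 0 from by omega] at h
  -- F row sums
  have Frow_ne : ∀ i : Fin n, (i : ℕ) ≠ n - 1 →
      ∑ j, ‖Frob n a i j‖ = 1 := by
    intro i hi
    have hilt := i.isLt
    have h1 : (i : ℕ) + 1 < n := by omega
    calc ∑ j, ‖Frob n a i j‖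
        = ∑ j : Fin n, (if (j : ℕ) = (i : ℕ) + 1 then (1 : ℝ) else 0) := by
          refine Finset.sum_congr rfl fun j _ => ?_
          by_cases h : (j : ℕ) = (i : ℕ) + 1 <;> simp [Frob, h, hi]
      _ = 1 := fin_sum_indicator h1 1
  have Frow_last : ∀ i : Fin n, (i : ℕ) = n - 1 →
      ∑ j, ‖Frob n a i j‖ = S := by
    intro i hi
    calc ∑ j, ‖Frob n a i j‖
        = ∑ j : Fin n, ‖a (j : ℕ)‖ := by
          refine Finset.sum_congr rfl fun j _ => ?_
          have hjlt := j.isLt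
          have hj : (j : ℕ) ≠ n - 1 + 1 := by omega
          simp [Frob, Matrix.of_apply, hj, hi, norm_neg]
      _ = S := by
          rw [hSdef]
          exact Fin.sum_univ_eq_sum_range (fun j => ‖a j‖) n
  -- F column sums
  have Fcol0 : ∀ j : Fin n, (j : ℕ) = 0 →
      ∑ i, ‖Frob n a i j‖ = ‖a 0‖ := by
    intro j hj
    calc ∑ i, ‖Frob n a i j‖
        = ∑ i : Fin n, (if (i : ℕ) = n - 1 then ‖a 0‖ else 0) := by
          refine Finset.sum_congr rfl fun i _ => ?_
          by_cases h2 : (i : ℕ) = n - 1 <;>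
            simp [Frob, Matrix.of_apply, h2, hj, norm_neg]
      _ = ‖a 0‖ := fin_sum_indicator (by omega) _
  have Fcolpos : ∀ j : Fin n, 1 ≤ (j : ℕ) →
      ∑ i, ‖Frob n a i j‖ = 1 + ‖a (j : ℕ)‖ := by
    intro j hj
    have hjn := j.isLt
    calc ∑ i, ‖Frob n a i j‖
        = ∑ i : Fin n, ((if (i : ℕ) = (j : ℕ) - 1 then (1 : ℝ) else 0) +
            (if (i : ℕ) = n - 1 then ‖a (j : ℕ)‖ else 0)) := by
          refine Finset.sum_congr rfl fun i _ => ?_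
          by_cases h1 : (j : ℕ) = (i : ℕ) + 1
          · have e2 : (i : ℕ) ≠ n - 1 := by omega
            simp [Frob, Matrix.of_apply, h1, e2, Nat.add_sub_cancel]
          · by_cases h2 : (i : ℕ) = n - 1
            · have h1' : (j : ℕ) ≠ n - 1 + 1 := by omega
              have e1 : n - 1 ≠ (j : ℕ) - 1 := by omega
              simp [Frob, Matrix.of_apply, h1', h2, e1, norm_neg]
            · have e1 : (i : ℕ) ≠ (j : ℕ) - 1 := by omega
              simp [Frob, Matrix.of_apply, h1, h2, e1]
      _ = 1 + ‖a (j : ℕ)‖ := by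
          rw [Finset.sum_add_distrib, fin_sum_indicator (by omega) (1 : ℝ),
            fin_sum_indicator (by omega) _]
  -- coefficient lower bounds for C
  have coefRow : ∀ j : ℕ, j < n → ‖a j‖ ≤ infNorm C := by
    intro j hj
    set k : Fin n := ⟨n - 1 - j, by omega⟩ with hkdef
    have hkv : (k : ℕ) = n - 1 - j := rfl
    have h := hval k
    rw [show n - 1 - (k : ℕ) = j from by omega] at h
    calc ‖a j‖ = ‖C (r k) (c k)‖ := by
          rw [h, norm_neg]
      _ ≤ _ := single_le_rowsum C (r k) (c k)
      _ ≤ _ := rowsum_le_infNorm C (r k)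
  have coefCol : ∀ j : ℕ, j < n → ‖a j‖ ≤ oneNorm C := by
    intro j hj
    set k : Fin n := ⟨n - 1 - j, by omega⟩ with hkdef
    have hkv : (k : ℕ) = n - 1 - j := rfl
    have h := hval k
    rw [show n - 1 - (k : ℕ) = j from by omega] at h
    calc ‖a j‖ = ‖C (r k) (c k)‖ := by
          rw [h, norm_neg]
      _ ≤ _ := single_le_colsum C (r k) (c k)
      _ ≤ _ := colsum_le_oneNorm C (c k)
  -- N(C) ≥ 1
  have hNCinf1 : (1 : ℝ) ≤ infNorm C := by
    have h01 : ((⟨0, by omega⟩ : Fin n) : ℕ) + 1 < n := by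
      show 0 + 1 < n; omega
    have h := hsupd ⟨0, by omega⟩ ⟨0 + 1, by omega⟩ rfl
    calc (1 : ℝ) = ‖C ⟨0, by omega⟩ ⟨0 + 1, by omega⟩‖ := by rw [h]; simp
      _ ≤ _ := single_le_rowsum C _ _
      _ ≤ _ := rowsum_le_infNorm C _
  have hNCone1 : (1 : ℝ) ≤ oneNorm C := by
    have h := hsupd ⟨n - 2, by omega⟩ ⟨n - 2 + 1, by omega⟩ rfl
    calc (1 : ℝ) = ‖C ⟨n - 2, by omega⟩ ⟨n - 2 + 1, by omega⟩‖ := by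
          rw [h]; simp
      _ ≤ _ := single_le_colsum C _ _
      _ ≤ _ := colsum_le_oneNorm C _
  -- M and T
  have hune : (Finset.univ : Finset (Fin n)).Nonempty := Finset.univ_nonempty
  set M : ℝ := Finset.univ.sup' hune (fun j : Fin n => ‖a (j : ℕ)‖) with hMdef
  have haM : ∀ j : Fin n, ‖a (j : ℕ)‖ ≤ M := fun j => by
    rw [hMdef]
    exact Finset.le_sup' (fun j : Fin n => ‖a (j : ℕ)‖) (Finset.mem_univ j)
  have ha0M : ‖a 0‖ ≤ M := haM ⟨0, by omega⟩
  have hM0 : 0 ≤ M := le_trans (norm_nonneg _) ha0M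
  have hMCinf : M ≤ infNorm C := by
    rw [hMdef]
    exact Finset.sup'_le _ _ fun j _ => coefRow (j : ℕ) j.isLt
  have hMCone : M ≤ oneNorm C := by
    rw [hMdef]
    exact Finset.sup'_le _ _ fun j _ => coefCol (j : ℕ) j.isLt
  have htne : (Finset.Ico 1 n).Nonempty := Finset.nonempty_Ico.mpr (by omega)
  set T : ℝ := (Finset.Ico 1 n).sup' htne (fun j => ‖a j‖) with hTdef
  have hTM : T ≤ M := by
    rw [hTdef]
    refine Finset.sup'_le _ _ fun j hj => ?_
    have hj' := Finset.mem_Ico.mp hj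
    exact haM ⟨j, hj'.2⟩
  have haT : ∀ j : Fin n, 1 ≤ (j : ℕ) → ‖a (j : ℕ)‖ ≤ T := fun j hj => by
    rw [hTdef]
    exact Finset.le_sup' (fun j : ℕ => ‖a j‖) (Finset.mem_Ico.mpr ⟨hj, j.isLt⟩)
  have hT0 : 0 ≤ T := by
    obtain ⟨j, hj⟩ := htne
    have hj' := Finset.mem_Ico.mp hj
    exact le_trans (norm_nonneg (a j))
      (by rw [hTdef]; exact Finset.le_sup' (fun j : ℕ => ‖a j‖) hj)
  -- F norm bounds
  have hFinf : infNorm (Frob n a) ≤ max 1 S := by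
    refine infNorm_le _ _ fun i => ?_
    by_cases hi : (i : ℕ) = n - 1
    · rw [Frow_last i hi]; exact le_max_right _ _
    · rw [Frow_ne i hi]; exact le_max_left _ _
  have hFone : oneNorm (Frob n a) ≤ max (‖a 0‖) (1 + T) := by
    refine oneNorm_le _ _ fun j => ?_
    by_cases hj : (j : ℕ) = 0
    · rw [Fcol0 j hj]; exact le_max_left _ _
    · rw [Fcolpos j (by omega)]
      exact le_trans (by linarith [haT j (by omega)]) (le_max_right _ _)
  -- structural two-entry bounds for C
  have rowBig : ∀ k : Fin n, (r k : ℕ) ≠ n - 1 →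
      1 + ‖a (n - 1 - (k : ℕ))‖ ≤ ∑ j, ‖C (r k) j‖ := by
    intro k hk
    have hrlt := (r k).isLt
    have hcr := hrc k
    have h2 : (r k : ℕ) + 1 < n := by omega
    have hsup2 : C (r k) ⟨(r k : ℕ) + 1, h2⟩ = 1 := hsupd _ _ rfl
    have hne2 : (⟨(r k : ℕ) + 1, h2⟩ : Fin n) ≠ c k := by
      refine Fin.ne_of_val_ne ?_
      show (r k : ℕ) + 1 ≠ (c k : ℕ)
      omega
    calc 1 + ‖a (n - 1 - (k : ℕ))‖
        = ‖C (r k) ⟨(r k : ℕ) + 1, h2⟩‖ + ‖C (r k) (c k)‖ := by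
          rw [hsup2, hval k]; simp [norm_neg]
      _ ≤ _ := pair_le_rowsum C (r k) hne2
  have rowA0 : ∀ k : Fin n, (r k : ℕ) = n - 1 → (k : ℕ) ≠ n - 1 →
      ‖a (n - 1 - (k : ℕ))‖ + ‖a 0‖ ≤
        ∑ j, ‖C (r k) j‖ := by
    intro k hk hkn
    have hcr := hrc k
    have hreq : r k = r kl := Fin.ext (by rw [hk, hrkl])
    have hcne : c k ≠ c kl := by
      refine Fin.ne_of_val_ne ?_
      intro h
      exact hkn (by omega)
    have e1 : C (r k) (c k) = -a (n - 1 - (k : ℕ)) := hval k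
    have e2 : C (r k) (c kl) = -a 0 := by rw [hreq]; exact hCa0
    calc ‖a (n - 1 - (k : ℕ))‖ + ‖a 0‖
        = ‖C (r k) (c k)‖ + ‖C (r k) (c kl)‖ := by
          rw [e1, e2]; simp [norm_neg]
      _ ≤ _ := pair_le_rowsum C (r k) hcne
  have colBig : ∀ k : Fin n, (c k : ℕ) ≠ 0 →
      1 + ‖a (n - 1 - (k : ℕ))‖ ≤ ∑ i, ‖C i (c k)‖ := by
    intro k hk
    have hclt := (c k).isLt
    have hcr := hrc k
    have h2 : (c k : ℕ) - 1 < n := by omega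
    have hsup2 : C ⟨(c k : ℕ) - 1, h2⟩ (c k) = 1 := by
      refine hsupd _ _ ?_
      show (c k : ℕ) = (c k : ℕ) - 1 + 1
      omega
    have hne2 : (⟨(c k : ℕ) - 1, h2⟩ : Fin n) ≠ r k := by
      refine Fin.ne_of_val_ne ?_
      show (c k : ℕ) - 1 ≠ (r k : ℕ)
      omega
    calc 1 + ‖a (n - 1 - (k : ℕ))‖
        = ‖C ⟨(c k : ℕ) - 1, h2⟩ (c k)‖ + ‖C (r k) (c k)‖ := by
          rw [hsup2, hval k]; simp [norm_neg]
      _ ≤ _ := pair_le_colsum C (c k) hne2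
  have colA0 : ∀ k : Fin n, (c k : ℕ) = 0 → (k : ℕ) ≠ n - 1 →
      ‖a (n - 1 - (k : ℕ))‖ + ‖a 0‖ ≤
        ∑ i, ‖C i (c k)‖ := by
    intro k hk hkn
    have hcr := hrc k
    have hklt := k.isLt
    have hceq : c k = c kl := Fin.ext (by rw [hk, hckl])
    have hrne : r k ≠ r kl := by
      refine Fin.ne_of_val_ne ?_
      rw [hrkl]
      omega
    have e1 : C (r k) (c k) = -a (n - 1 - (k : ℕ)) := hval k
    have e2 : C (r kl) (c k) = -a 0 := by rw [hceq]; exact hCa0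
    calc ‖a (n - 1 - (k : ℕ))‖ + ‖a 0‖
        = ‖C (r k) (c k)‖ + ‖C (r kl) (c k)‖ := by
          rw [e1, e2]; simp [norm_neg]
      _ ≤ _ := pair_le_colsum C (c k) hrne
  -- small norm forces small S
  have H1 : infNorm C ≤ 1 → S ≤ 1 := by
    intro h
    have hz : ∀ k : Fin n, (r k : ℕ) ≠ n - 1 →
        ‖a (n - 1 - (k : ℕ))‖ = 0 := by
      intro k hk
      have h1 := le_trans (rowBig k hk) (le_trans (rowsum_le_infNorm C (r k)) h)
      have h2 := norm_nonneg (a (n - 1 - (k : ℕ)))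
      linarith
    rw [← hSS, ← Finset.sum_filter_add_sum_filter_not Finset.univ
      (fun k => (r k : ℕ) = n - 1)]
    have hz2 : ∑ k ∈ Finset.univ.filter (fun k : Fin n => ¬(r k : ℕ) = n - 1),
        ‖a (n - 1 - (k : ℕ))‖ = 0 :=
      Finset.sum_eq_zero fun k hk => hz k (Finset.mem_filter.mp hk).2
    rw [hz2, add_zero]
    have hinj : ∀ k1 ∈ Finset.univ.filter (fun k : Fin n => (r k : ℕ) = n - 1),
        ∀ k2 ∈ Finset.univ.filter (fun k : Fin n => (r k : ℕ) = n - 1),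
        c k1 = c k2 → k1 = k2 := by
      intro k1 hk1 k2 hk2 hc12
      have e1 := hrc k1
      have e2 := hrc k2
      have m1 := (Finset.mem_filter.mp hk1).2
      have m2 := (Finset.mem_filter.mp hk2).2
      have hcc : (c k1 : ℕ) = (c k2 : ℕ) := congrArg Fin.val hc12
      exact Fin.ext (by omega)
    have hrwsum : ∑ k ∈ Finset.univ.filter (fun k : Fin n => (r k : ℕ) = n - 1),
        ‖a (n - 1 - (k : ℕ))‖ =
        ∑ j ∈ (Finset.univ.filter (fun k : Fin n => (r k : ℕ) = n - 1)).image c,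
          ‖C (r kl) j‖ := by
      rw [Finset.sum_image hinj]
      refine Finset.sum_congr rfl fun k hk => ?_
      have hkr : (r k : ℕ) = n - 1 := (Finset.mem_filter.mp hk).2
      have hreq : r kl = r k := Fin.ext (by rw [hrkl, hkr])
      rw [hreq, hval k, norm_neg]
    rw [hrwsum]
    calc ∑ j ∈ (Finset.univ.filter (fun k : Fin n => (r k : ℕ) = n - 1)).image c,
          ‖C (r kl) j‖
        ≤ ∑ j, ‖C (r kl) j‖ :=
          Finset.sum_le_sum_of_subset_of_nonneg (Finset.subset_univ _)
            (fun _ _ _ => norm_nonneg _)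
      _ ≤ infNorm C := rowsum_le_infNorm C (r kl)
      _ ≤ 1 := h
  have H2 : oneNorm C ≤ 1 → S ≤ 1 := by
    intro h
    have hz : ∀ k : Fin n, (c k : ℕ) ≠ 0 →
        ‖a (n - 1 - (k : ℕ))‖ = 0 := by
      intro k hk
      have h1 := le_trans (colBig k hk) (le_trans (colsum_le_oneNorm C (c k)) h)
      have h2 := norm_nonneg (a (n - 1 - (k : ℕ)))
      linarith
    rw [← hSS, ← Finset.sum_filter_add_sum_filter_not Finset.univ
      (fun k => (c k : ℕ) = 0)]
    have hz2 : ∑ k ∈ Finset.univ.filter (fun k : Fin n => ¬(c k : ℕ) = 0),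
        ‖a (n - 1 - (k : ℕ))‖ = 0 :=
      Finset.sum_eq_zero fun k hk => hz k (Finset.mem_filter.mp hk).2
    rw [hz2, add_zero]
    have hinj : ∀ k1 ∈ Finset.univ.filter (fun k : Fin n => (c k : ℕ) = 0),
        ∀ k2 ∈ Finset.univ.filter (fun k : Fin n => (c k : ℕ) = 0),
        r k1 = r k2 → k1 = k2 := by
      intro k1 hk1 k2 hk2 hr12
      have e1 := hrc k1
      have e2 := hrc k2
      have m1 := (Finset.mem_filter.mp hk1).2
      have m2 := (Finset.mem_filter.mp hk2).2
      have hrr : (r k1 : ℕ) = (r k2 : ℕ) := congrArg Fin.val hr12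
      exact Fin.ext (by omega)
    have hrwsum : ∑ k ∈ Finset.univ.filter (fun k : Fin n => (c k : ℕ) = 0),
        ‖a (n - 1 - (k : ℕ))‖ =
        ∑ i ∈ (Finset.univ.filter (fun k : Fin n => (c k : ℕ) = 0)).image r,
          ‖C i (c kl)‖ := by
      rw [Finset.sum_image hinj]
      refine Finset.sum_congr rfl fun k hk => ?_
      have hkc : (c k : ℕ) = 0 := (Finset.mem_filter.mp hk).2
      have hceq : c kl = c k := Fin.ext (by rw [hckl, hkc])
      rw [hceq, hval k, norm_neg]
    rw [hrwsum]
    calc ∑ i ∈ (Finset.univ.filter (fun k : Fin n => (c k : ℕ) = 0)).image r,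
          ‖C i (c kl)‖
        ≤ ∑ i, ‖C i (c kl)‖ :=
          Finset.sum_le_sum_of_subset_of_nonneg (Finset.subset_univ _)
            (fun _ _ _ => norm_nonneg _)
      _ ≤ oneNorm C := colsum_le_oneNorm C (c kl)
      _ ≤ 1 := h
  -- assembling
  have hNNF_one : NN (Frob n a) ≤ oneNorm (Frob n a) := min_le_right _ _
  have hNNF_inf : NN (Frob n a) ≤ infNorm (Frob n a) := min_le_left _ _
  have hNC1 : (1 : ℝ) ≤ NN C := le_min hNCinf1 hNCone1
  have hNCM : M ≤ NN C := le_min hMCinf hMCone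
  have hF1M : NN (Frob n a) ≤ 1 + M :=
    le_trans hNNF_one (le_trans hFone (max_le (by linarith) (by linarith)))
  refine ⟨?_, by linarith, ?_⟩
  · -- N(F) < 2 N(C)
    by_cases hS1 : S ≤ 1
    · have h1 : NN (Frob n a) ≤ 1 :=
        le_trans hNNF_inf (le_trans hFinf (max_le le_rfl hS1))
      linarith
    · push_neg at hS1
      have hIgt1 : 1 < infNorm C := by
        by_contra hle
        push_neg at hle
        linarith [H1 hle]
      have hOgt1 : 1 < oneNorm C := by
        by_contra hle
        push_neg at hle
        linarith [H2 hle]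
      have hIM : (1 + M) / 2 < infNorm C := by
        rcases le_or_gt M 1 with h | h
        · linarith
        · linarith
      have hOM : (1 + M) / 2 < oneNorm C := by
        rcases le_or_gt M 1 with h | h
        · linarith
        · linarith
      have hmin : (1 + M) / 2 < NN C := lt_min hIM hOM
      linarith
  · -- strict bound when a 0 ≠ 0
    intro h0
    have ha0pos : 0 < ‖a 0‖ := norm_pos_iff.mpr h0
    by_cases hcc : 1 + T ≤ ‖a 0‖
    · have h1 : NN (Frob n a) ≤ ‖a 0‖ :=
        le_trans hNNF_one (le_trans hFone (max_le le_rfl hcc))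
      have h2 : NN (Frob n a) ≤ NN C := le_trans h1 (le_trans ha0M hNCM)
      linarith
    · push_neg at hcc
      have hFT : NN (Frob n a) ≤ 1 + T :=
        le_trans hNNF_one (le_trans hFone (max_le (le_of_lt hcc) le_rfl))
      obtain ⟨Jt, hJtmem, hJt⟩ :=
        Finset.exists_mem_eq_sup' htne (fun j => ‖a j‖)
      have hJt' := Finset.mem_Ico.mp hJtmem
      set k : Fin n := ⟨n - 1 - Jt, by omega⟩ with hkdef
      have hkv : (k : ℕ) = n - 1 - Jt := rfl
      have hkn : (k : ℕ) ≠ n - 1 := by omega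
      have hTk : ‖a (n - 1 - (k : ℕ))‖ = T := by
        rw [show n - 1 - (k : ℕ) = Jt from by omega]
        exact (hTdef.trans hJt).symm
      have hTinf : T < infNorm C := by
        by_cases hr1 : (r k : ℕ) = n - 1
        · have h1 := rowA0 k hr1 hkn
          rw [hTk] at h1
          linarith [rowsum_le_infNorm C (r k)]
        · have h1 := rowBig k hr1
          rw [hTk] at h1
          linarith [rowsum_le_infNorm C (r k)]
      have hTone : T < oneNorm C := by
        by_cases hc1 : (c k : ℕ) = 0
        · have h1 := colA0 k hc1 hkn
          rw [hTk] at h1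
          linarith [colsum_le_oneNorm C (c k)]
        · have h1 := colBig k hc1
          rw [hTk] at h1
          linarith [colsum_le_oneNorm C (c k)]
      have hmin : T < NN C := lt_min hTinf hTone
      linarith

end
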